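/- Let R be a commutative ring, m ≥ 1, and let A be a 2m×2m matrix over R with m×m blocks A11, A12, A21, A22, and Δ := det(A11) • A22 − A21 · adj(A11) · A12. Then det(A11)^(m−1) • B12 = − adj(A11) · A12 · adj(Δ), where B12 denotes the top-right m×m block of the adjugate matrix adj(A). -/
import Mathlib
open Matrix

theorem ff_det {K : Type*} [Field K] (m : ℕ) (hm : 1 ≤ m)
    (A11 A12 A21 A22 : Matrix (Fin m) (Fin m) K)
    (h1 : A11.det ≠ 0) :
    (A11.det • A22 - A21 * A11.adjugate * A12).det =
      A11.det ^ (m - 1) * (fromBlocks A11 A12 A21 A22).det := by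
  set d := A11.det with hd
  set A := fromBlocks A11 A12 A21 A22 with hAdef
  set Δ := d • A22 - A21 * A11.adjugate * A12 with hΔ
  set U : Matrix (Fin m ⊕ Fin m) (Fin m ⊕ Fin m) K :=
    fromBlocks (d • 1) (-(A11.adjugate * A12)) 0 (d • 1) with hU
  set N : Matrix (Fin m ⊕ Fin m) (Fin m ⊕ Fin m) K :=
    fromBlocks (d • A11) 0 (d • A21) Δ with hN
  have hAU : A * U = N := by
    rw [hAdef, hU, hN, fromBlocks_multiply, fromBlocks_inj]
    refine ⟨?_, ?_, ?_, ?_⟩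
    · simp [Matrix.mul_smul]
    · simp only [Matrix.mul_neg, Matrix.mul_smul, Matrix.mul_one, ← Matrix.mul_assoc,
        mul_adjugate, ← hd, Matrix.smul_mul, Matrix.one_mul]
      exact neg_add_cancel _
    · simp [Matrix.mul_smul]
    · rw [Matrix.mul_neg, Matrix.mul_smul, Matrix.mul_one, hΔ, ← Matrix.mul_assoc,
        neg_add_eq_sub]
  have hdetU : U.det = d ^ m * d ^ m := by
    rw [hU, det_fromBlocks_zero₂₁]
    simp [det_smul]
  have hdetN : N.det = d ^ m * d * Δ.det := by
    rw [hN, det_fromBlocks_zero₁₂]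
    simp [det_smul, ← hd, mul_comm, mul_assoc, mul_left_comm]
  have h := congrArg Matrix.det hAU
  rw [det_mul, hdetU, hdetN] at h
  have hpow : d ^ m * d ^ m = (d ^ m * d) * d ^ (m - 1) := by
    rw [mul_assoc, ← pow_succ']
    congr 2
    omega
  rw [hpow, ← mul_assoc, mul_comm A.det, mul_assoc] at h
  have := mul_left_cancel₀ (mul_ne_zero (pow_ne_zero m h1) h1) h.symm
  rw [this, mul_comm]

theorem ff_key {K : Type*} [Field K] (m : ℕ) (hm : 1 ≤ m)
    (A11 A12 A21 A22 : Matrix (Fin m) (Fin m) K)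
    (h1 : A11.det ≠ 0) (hA : (fromBlocks A11 A12 A21 A22).det ≠ 0) :
    A11.det ^ (m - 1) • (Matrix.fromBlocks A11 A12 A21 A22).adjugate.toBlocks₁₂ =
      -(A11.adjugate * A12 * (A11.det • A22 - A21 * A11.adjugate * A12).adjugate) := by
  have hdet := ff_det m hm A11 A12 A21 A22 h1
  set d := A11.det with hd
  set A := fromBlocks A11 A12 A21 A22 with hAdef
  set Δ := d • A22 - A21 * A11.adjugate * A12 with hΔ
  set B := A.adjugate with hB
  set B11 := B.toBlocks₁₁ with hB11
  set B12 := B.toBlocks₁₂ with hB12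
  set B21 := B.toBlocks₂₁ with hB21
  set B22 := B.toBlocks₂₂ with hB22
  have hBblocks : B = fromBlocks B11 B12 B21 B22 := (fromBlocks_toBlocks B).symm
  -- blocks of adjugate_mul
  have hBA : B * A = A.det • 1 := adjugate_mul A
  rw [hBblocks, hAdef, fromBlocks_multiply, ← fromBlocks_one, fromBlocks_smul] at hBA
  rw [fromBlocks_inj] at hBA
  obtain ⟨h11, h12, h21, h22⟩ := hBA
  rw [smul_zero] at h21
  -- blocks of mul_adjugate
  have hAB : A * B = A.det • 1 := mul_adjugate A
  rw [hBblocks, hAdef, fromBlocks_multiply, ← fromBlocks_one, fromBlocks_smul] at hAB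
  rw [fromBlocks_inj] at hAB
  obtain ⟨g11, g12, g21, g22⟩ := hAB
  rw [smul_zero] at g12
  -- E2 : d^(m-1) • B22 = d • Δ.adjugate
  have hB22A21 : B22 * A21 = -(B21 * A11) := by
    rw [eq_neg_iff_add_eq_zero, add_comm]; exact h21
  have hB22Δ : B22 * Δ = (d * A.det) • 1 := by
    calc B22 * Δ = d • (B22 * A22) - B22 * A21 * (A11.adjugate * A12) := by
          rw [hΔ, Matrix.mul_sub, Matrix.mul_smul, Matrix.mul_assoc, Matrix.mul_assoc]
      _ = d • (B22 * A22) + B21 * (A11 * A11.adjugate) * A12 := by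
          rw [hB22A21, Matrix.neg_mul, sub_neg_eq_add, Matrix.mul_assoc, Matrix.mul_assoc,
            Matrix.mul_assoc]
      _ = d • (B21 * A12 + B22 * A22) := by
          rw [mul_adjugate, ← hd]
          simp only [Matrix.mul_smul, Matrix.smul_mul, Matrix.mul_one, smul_add]
          rw [add_comm]
      _ = (d * A.det) • 1 := by rw [h22, smul_smul]
  have hE2 : d ^ (m - 1) • B22 = d • Δ.adjugate := by
    have h := congrArg (· * Δ.adjugate) hB22Δ
    simp only [Matrix.mul_assoc, mul_adjugate, Matrix.smul_mul, Matrix.one_mul,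
      Matrix.mul_smul, Matrix.mul_one] at h
    rw [hdet] at h
    -- h : (d^(m-1) * A.det) • B22 = (d * A.det) • Δ.adjugate
    have h' : A.det • (d ^ (m - 1) • B22) = A.det • (d • Δ.adjugate) := by
      rw [smul_smul, smul_smul, mul_comm, mul_comm A.det d]
      exact h
    exact smul_right_injective _ hA h'
  -- E1
  have hA11B12 : A11 * B12 = -(A12 * B22) := by
    rw [eq_neg_iff_add_eq_zero]; exact g12
  have hu : IsUnit A11 := (isUnit_iff_isUnit_det _).mpr (Ne.isUnit h1)
  apply hu.mul_left_cancel
  calc A11 * (d ^ (m - 1) • B12)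
      = d ^ (m - 1) • (A11 * B12) := by rw [Matrix.mul_smul]
    _ = -(A12 * (d ^ (m - 1) • B22)) := by rw [hA11B12, Matrix.mul_smul, smul_neg]
    _ = -(A12 * (d • Δ.adjugate)) := by rw [hE2]
    _ = A11 * -(A11.adjugate * A12 * Δ.adjugate) := by
        rw [Matrix.mul_neg, ← Matrix.mul_assoc, ← Matrix.mul_assoc, mul_adjugate, ← hd]
        simp only [Matrix.smul_mul, Matrix.one_mul, Matrix.mul_smul]

section
variable {R S : Type*} [CommRing R] [CommRing S]

theorem mapMatrix_smul' {n : Type*} [Fintype n] [DecidableEq n] (f : S →+* R) (c : S)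
    (M : Matrix n n S) : f.mapMatrix (c • M) = f c • f.mapMatrix M := by
  ext i j
  simp [Matrix.smul_apply, smul_eq_mul]

theorem mapMatrix_toBlocks₁₂ (f : S →+* R) {n : Type*} [Fintype n] [DecidableEq n]
    (M : Matrix (n ⊕ n) (n ⊕ n) S) :
    (M.toBlocks₁₂).map f = (f.mapMatrix M).toBlocks₁₂ := rfl

theorem ff_map (f : S →+* R) (m : ℕ)
    (X11 X12 X21 X22 : Matrix (Fin m) (Fin m) S) :
    f.mapMatrix (X11.det ^ (m - 1) •
        (fromBlocks X11 X12 X21 X22).adjugate.toBlocks₁₂) =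
      (f.mapMatrix X11).det ^ (m - 1) •
        (fromBlocks (f.mapMatrix X11) (f.mapMatrix X12) (f.mapMatrix X21)
          (f.mapMatrix X22)).adjugate.toBlocks₁₂ ∧
    f.mapMatrix (-(X11.adjugate * X12 *
        (X11.det • X22 - X21 * X11.adjugate * X12).adjugate)) =
      -((f.mapMatrix X11).adjugate * f.mapMatrix X12 *
        ((f.mapMatrix X11).det • f.mapMatrix X22 -
          f.mapMatrix X21 * (f.mapMatrix X11).adjugate * f.mapMatrix X12).adjugate) := by
  have hfb : f.mapMatrix (fromBlocks X11 X12 X21 X22) =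
      fromBlocks (f.mapMatrix X11) (f.mapMatrix X12) (f.mapMatrix X21) (f.mapMatrix X22) := by
    simp only [RingHom.mapMatrix_apply, fromBlocks_map]
  constructor
  · rw [mapMatrix_smul', map_pow, RingHom.map_det]
    congr 1
    rw [show f.mapMatrix (fromBlocks X11 X12 X21 X22).adjugate.toBlocks₁₂ =
        ((fromBlocks X11 X12 X21 X22).adjugate.toBlocks₁₂).map f from rfl,
      mapMatrix_toBlocks₁₂, RingHom.map_adjugate, hfb]
  · rw [map_neg, _root_.map_mul, _root_.map_mul, RingHom.map_adjugate, RingHom.map_adjugate,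
      map_sub, _root_.map_mul, _root_.map_mul, RingHom.map_adjugate, mapMatrix_smul',
      RingHom.map_det]

theorem mapMatrix_injective {n o : Type*} (f : S →+* R) (hf : Function.Injective f) :
    Function.Injective (fun M : Matrix n o S => M.map f) := by
  intro M N h
  ext i j
  exact hf (congrFun (congrFun h i) j)

end

/-- For a commutative ring `R`, `m ≥ 1`, and a `2m × 2m` matrix `A` over `R`
with `m × m` blocks `A11, A12, A21, A22`, letting
`Δ = det(A11) • A22 - A21 * adj(A11) * A12`, the top-right block `B12` of `adj(A)`
satisfies `det(A11) ^ (m - 1) • B12 = - adj(A11) * A12 * adj(Δ)`. -/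
theorem ffSchur_adjugate_block12 {R : Type*} [CommRing R] (m : ℕ) (hm : 1 ≤ m)
    (A11 A12 A21 A22 : Matrix (Fin m) (Fin m) R) :
    A11.det ^ (m - 1) • (Matrix.fromBlocks A11 A12 A21 A22).adjugate.toBlocks₁₂ =
      -(A11.adjugate * A12 * (A11.det • A22 - A21 * A11.adjugate * A12).adjugate) := by
  classical
  set S := MvPolynomial ((Fin m ⊕ Fin m) × (Fin m ⊕ Fin m)) ℤ with hS
  set X : Matrix (Fin m ⊕ Fin m) (Fin m ⊕ Fin m) S :=
    mvPolynomialX (Fin m ⊕ Fin m) (Fin m ⊕ Fin m) ℤ with hXdef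
  set X11 := X.toBlocks₁₁ with hX11
  set X12 := X.toBlocks₁₂ with hX12
  set X21 := X.toBlocks₂₁ with hX21
  set X22 := X.toBlocks₂₂ with hX22
  have hX : fromBlocks X11 X12 X21 X22 = X := fromBlocks_toBlocks X
  -- nonvanishing determinants in S
  have hdetX : X.det ≠ 0 := det_mvPolynomialX_ne_zero _ ℤ
  have hdetX11 : X11.det ≠ 0 := by
    have hinj : Function.Injective
        (fun p : Fin m × Fin m => ((Sum.inl p.1 : Fin m ⊕ Fin m), (Sum.inl p.2 : Fin m ⊕ Fin m))) := by
      intro p q h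
      simp only [Prod.mk.injEq, Sum.inl.injEq] at h
      exact Prod.ext h.1 h.2
    set g := (MvPolynomial.rename
      (fun p : Fin m × Fin m => ((Sum.inl p.1 : Fin m ⊕ Fin m), (Sum.inl p.2 : Fin m ⊕ Fin m))) :
      MvPolynomial (Fin m × Fin m) ℤ →ₐ[ℤ] S) with hg
    have hX11g : X11 = g.toRingHom.mapMatrix (mvPolynomialX (Fin m) (Fin m) ℤ) := by
      ext i j
      simp [hX11, toBlocks₁₁, hXdef, mvPolynomialX, hg]
    intro h0
    apply det_mvPolynomialX_ne_zero (Fin m) ℤ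
    have hginj : Function.Injective g := MvPolynomial.rename_injective _ hinj
    apply hginj
    rw [map_zero]
    have h0' : (g.toRingHom.mapMatrix (mvPolynomialX (Fin m) (Fin m) ℤ)).det = 0 := by
      rw [← hX11g]; exact h0
    rw [← RingHom.map_det] at h0'
    exact h0'
  -- move to fraction field
  set F := FractionRing S with hF
  set ψ := algebraMap S F with hψdef
  have hψ : Function.Injective ψ := IsFractionRing.injective S F
  have hψdet : ∀ M : Matrix (Fin m ⊕ Fin m) (Fin m ⊕ Fin m) S,
      M.det ≠ 0 → (ψ.mapMatrix M).det ≠ 0 := by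
    intro M hM h0
    rw [← RingHom.map_det] at h0
    exact hM (hψ (by rw [h0, map_zero]))
  have hψdet' : (ψ.mapMatrix X11).det ≠ 0 := by
    intro h0
    rw [← RingHom.map_det] at h0
    exact hdetX11 (hψ (by rw [h0, map_zero]))
  have hfb : ψ.mapMatrix X = fromBlocks (ψ.mapMatrix X11) (ψ.mapMatrix X12)
      (ψ.mapMatrix X21) (ψ.mapMatrix X22) := by
    rw [← hX]
    simp only [RingHom.mapMatrix_apply, fromBlocks_map]
  have key := ff_key m hm (ψ.mapMatrix X11) (ψ.mapMatrix X12) (ψ.mapMatrix X21) (ψ.mapMatrix X22)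
    hψdet' (by rw [← hfb]; exact hψdet X hdetX)
  -- pull back to S
  obtain ⟨hm1, hm2⟩ := ff_map ψ m X11 X12 X21 X22
  rw [← hm1, ← hm2] at key
  have keyS : X11.det ^ (m - 1) • (fromBlocks X11 X12 X21 X22).adjugate.toBlocks₁₂ =
      -(X11.adjugate * X12 * (X11.det • X22 - X21 * X11.adjugate * X12).adjugate) := by
    have : Function.Injective (ψ.mapMatrix :
        Matrix (Fin m) (Fin m) S → Matrix (Fin m) (Fin m) F) := by
      intro M N h
      refine Matrix.ext fun i j => ?_
      exact hψ (congrFun (congrFun (congrArg (fun M : Matrix (Fin m) (Fin m) F => (M : (Fin m) → (Fin m) → F)) h) i) j)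
    exact this key
  -- push forward to R
  set φ := (MvPolynomial.aeval
    (fun p : (Fin m ⊕ Fin m) × (Fin m ⊕ Fin m) => (fromBlocks A11 A12 A21 A22) p.1 p.2) :
      S →ₐ[ℤ] R) with hφdef
  have hφX : φ.toRingHom.mapMatrix X = fromBlocks A11 A12 A21 A22 := by
    have := mvPolynomialX_mapMatrix_aeval (R := ℤ) (fromBlocks A11 A12 A21 A22)
    exact this
  have hφ11 : φ.toRingHom.mapMatrix X11 = A11 := by
    have : φ.toRingHom.mapMatrix X11 = (φ.toRingHom.mapMatrix X).toBlocks₁₁ := rfl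
    rw [this, hφX, toBlocks_fromBlocks₁₁]
  have hφ12 : φ.toRingHom.mapMatrix X12 = A12 := by
    have : φ.toRingHom.mapMatrix X12 = (φ.toRingHom.mapMatrix X).toBlocks₁₂ := rfl
    rw [this, hφX, toBlocks_fromBlocks₁₂]
  have hφ21 : φ.toRingHom.mapMatrix X21 = A21 := by
    have : φ.toRingHom.mapMatrix X21 = (φ.toRingHom.mapMatrix X).toBlocks₂₁ := rfl
    rw [this, hφX, toBlocks_fromBlocks₂₁]
  have hφ22 : φ.toRingHom.mapMatrix X22 = A22 := by
    have : φ.toRingHom.mapMatrix X22 = (φ.toRingHom.mapMatrix X).toBlocks₂₂ := rfl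
    rw [this, hφX, toBlocks_fromBlocks₂₂]
  obtain ⟨hn1, hn2⟩ := ff_map φ.toRingHom m X11 X12 X21 X22
  have := congrArg (φ.toRingHom.mapMatrix) keyS
  rw [hn1, hn2, hφ11, hφ12, hφ21, hφ22] at this
  exact this
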